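/- Let S and T be Young diagrams. For a cell x = (i,j) (row index i, column index j, both 0-based), define the arm-length of x with respect to a Young diagram Y as a_Y(i,j) = (length of row i of Y) − j − 1 and the leg-length as l_Y(i,j) = (length of column j of Y) − i − 1 (these are integers, possibly negative, when x need not lie in Y). For a Young diagram Y define Q_Y(t₁,t₂) = Σ_{(i,j)∈Y} t₁^i t₂^j. Then in the ring of Laurent polynomials ℤ[t₁^{±1}, t₂^{±1}] the following identity holds: Q_S(t₁,t₂)·t₁t₂ + Q_T(t₁^{-1},t₂^{-1}) − Q_S(t₁,t₂)·Q_T(t₁^{-1},t₂^{-1})·(1−t₁)(1−t₂) = Σ_{s∈S} t₁^{−l_T(s)} t₂^{a_S(s)+1} + Σ_{t∈T} t₁^{l_S(t)+1} t₂^{−a_T(t)}. -/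

import Mathlib

/-- The monomial `t₁^a * t₂^b` in the Laurent polynomial ring `ℤ[t₁^{±1}, t₂^{±1}]`,
realized as `LaurentPolynomial (LaurentPolynomial ℤ)` where the outer variable is `t₁`
and the inner (coefficient) variable is `t₂`. -/
noncomputable def laurentMon (a b : ℤ) : LaurentPolynomial (LaurentPolynomial ℤ) :=
  LaurentPolynomial.C (LaurentPolynomial.T b) * LaurentPolynomial.T a

/-- Arm-length `a_Y(i,j) = rowLen Y i − j − 1` of the cell `(i,j)` with respect to the
Young diagram `Y` (an integer, possibly negative). -/
def armLength (Y : YoungDiagram) (c : ℕ × ℕ) : ℤ :=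
  (Y.rowLen c.1 : ℤ) - (c.2 : ℤ) - 1

/-- Leg-length `l_Y(i,j) = colLen Y j − i − 1` of the cell `(i,j)` with respect to the
Young diagram `Y` (an integer, possibly negative). -/
def legLength (Y : YoungDiagram) (c : ℕ × ℕ) : ℤ :=
  (Y.colLen c.2 : ℤ) - (c.1 : ℤ) - 1

section TangentAux

open Finset

lemma mon_mul (a b c d : ℤ) :
    laurentMon a b * laurentMon c d = laurentMon (a + c) (b + d) := by
  unfold laurentMon
  rw [LaurentPolynomial.T_add, LaurentPolynomial.T_add, map_mul]
  ring

lemma mon_zero : laurentMon 0 0 = 1 := by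
  simp [laurentMon]

/-- telescoping in `t₁` -/
lemma tel1 (n : ℕ) (k : ℤ) :
    (1 - laurentMon 1 0) * ∑ i ∈ range n, laurentMon (i : ℤ) k
      = laurentMon 0 k - laurentMon (n : ℤ) k := by
  induction n with
  | zero => simp
  | succ n ih =>
    rw [sum_range_succ, mul_add, ih]
    have : laurentMon 1 0 * laurentMon (n : ℤ) k = laurentMon ((n : ℤ) + 1) k := by
      rw [mon_mul]; ring_nf
    push_cast
    rw [sub_mul, one_mul, this]
    ring

lemma tel2 (n : ℕ) (k : ℤ) :
    (1 - laurentMon 0 1) * ∑ j ∈ range n, laurentMon k (j : ℤ)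
      = laurentMon k 0 - laurentMon k (n : ℤ) := by
  induction n with
  | zero => simp
  | succ n ih =>
    rw [sum_range_succ, mul_add, ih]
    have : laurentMon 0 1 * laurentMon k (n : ℤ) = laurentMon k ((n : ℤ) + 1) := by
      rw [mon_mul]; ring_nf
    push_cast
    rw [sub_mul, one_mul, this]
    ring

/-- Sum over the cells of a Young diagram as an iterated sum over rows. -/
lemma sum_cells (S : YoungDiagram) (f : ℕ × ℕ → LaurentPolynomial (LaurentPolynomial ℤ)) :
    ∑ s ∈ S.cells, f s
      = ∑ i ∈ range (S.colLen 0), ∑ j ∈ range (S.rowLen i), f (i, j) := by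
  rw [show (∑ i ∈ range (S.colLen 0), ∑ j ∈ range (S.rowLen i), f (i, j))
        = ∑ x ∈ (range (S.colLen 0)).sigma (fun i => range (S.rowLen i)), f (x.1, x.2)
      from (Finset.sum_sigma (range (S.colLen 0)) (fun i => range (S.rowLen i)) (fun x => f (x.1, x.2))).symm]
  apply Finset.sum_bij' (fun x _ => (⟨x.1, x.2⟩ : Σ _ : ℕ, ℕ))
    (fun x _ => ((x.1, x.2) : ℕ × ℕ))
  · intro a ha
    simp only [Finset.mem_sigma, Finset.mem_range] at *
    rw [YoungDiagram.mem_cells] at ha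
    constructor
    · rw [← YoungDiagram.mem_iff_lt_colLen]
      exact S.up_left_mem le_rfl (Nat.zero_le _) ha
    · rwa [← YoungDiagram.mem_iff_lt_rowLen]
  · intro a ha
    simp only [Finset.mem_sigma, Finset.mem_range] at ha
    rw [YoungDiagram.mem_cells, YoungDiagram.mem_iff_lt_rowLen]
    exact ha.2
  · intro a _; rfl
  · intro a _; rfl
  · intro a _; rfl

/-- Sum over a column of a Young diagram. -/
lemma sum_col (S : YoungDiagram) (q : ℕ) (f : ℕ × ℕ → LaurentPolynomial (LaurentPolynomial ℤ)) :
    ∑ s ∈ S.col q, f s = ∑ i ∈ range (S.colLen q), f (i, q) := by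
  rw [YoungDiagram.col_eq_prod, Finset.sum_product]
  simp

/-- Sum over a row of a Young diagram. -/
lemma sum_row (S : YoungDiagram) (p : ℕ) (f : ℕ × ℕ → LaurentPolynomial (LaurentPolynomial ℤ)) :
    ∑ s ∈ S.row p, f s = ∑ j ∈ range (S.rowLen p), f (p, j) := by
  rw [YoungDiagram.row_eq_prod, Finset.sum_product]
  simp

noncomputable def QY (S : YoungDiagram) : LaurentPolynomial (LaurentPolynomial ℤ) :=
  ∑ s ∈ S.cells, laurentMon (s.1 : ℤ) (s.2 : ℤ)

/-- Key hook-type identity: for every Young diagram `S` and column index `q`. -/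
lemma lemA (S : YoungDiagram) (q : ℕ) :
    1 - QY S * (1 - laurentMon 1 0) * (1 - laurentMon 0 1)
    = (1 - laurentMon 1 0) * (∑ i ∈ range (S.colLen q), laurentMon (i : ℤ) (S.rowLen i : ℤ))
      + laurentMon (S.colLen q : ℤ) (q : ℤ)
      + (1 - laurentMon 0 1) * ∑ j ∈ range q, laurentMon (S.colLen j : ℤ) (j : ℤ) := by
  induction q with
  | zero =>
    have h1 : QY S * (1 - laurentMon 0 1)
        = (∑ i ∈ range (S.colLen 0), laurentMon (i : ℤ) 0)
          - ∑ i ∈ range (S.colLen 0), laurentMon (i : ℤ) (S.rowLen i : ℤ) := by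
      rw [QY, sum_cells S (fun s => laurentMon (s.1 : ℤ) (s.2 : ℤ)), Finset.sum_mul,
        ← Finset.sum_sub_distrib]
      exact Finset.sum_congr rfl fun i _ => by rw [mul_comm]; simpa using tel2 (S.rowLen i) (i : ℤ)
    have h2 := tel1 (S.colLen 0) 0
    have h0 := mon_zero
    simp only [Nat.cast_zero, range_zero, Finset.sum_empty, mul_zero, add_zero]
    linear_combination (-(1 - laurentMon 1 0)) * h1 - h2 - h0
  | succ q ih =>
    set c := S.colLen q with hc
    set c' := S.colLen (q + 1) with hc'
    have hcc : c' ≤ c := S.colLen_anti q (q + 1) (Nat.le_succ q)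
    have key1 : (∑ i ∈ range c, laurentMon (i : ℤ) (S.rowLen i : ℤ))
        = (∑ i ∈ range c', laurentMon (i : ℤ) (S.rowLen i : ℤ))
          + ∑ i ∈ Finset.Ico c' c, laurentMon (i : ℤ) ((q : ℤ) + 1) := by
      rw [← Finset.sum_range_add_sum_Ico _ hcc]
      congr 1
      refine Finset.sum_congr rfl fun i hi => ?_
      rw [Finset.mem_Ico] at hi
      have h1 : q < S.rowLen i := by
        rw [← YoungDiagram.mem_iff_lt_rowLen, YoungDiagram.mem_iff_lt_colLen]
        exact hi.2
      have h2 : ¬ (q + 1 < S.rowLen i) := by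
        rw [← YoungDiagram.mem_iff_lt_rowLen, YoungDiagram.mem_iff_lt_colLen]
        omega
      have : S.rowLen i = q + 1 := by omega
      rw [this]; push_cast; ring_nf
    have key3 : (1 - laurentMon 1 0) * (∑ i ∈ Finset.Ico c' c, laurentMon (i : ℤ) ((q : ℤ) + 1))
        = laurentMon (c' : ℤ) ((q : ℤ) + 1) - laurentMon (c : ℤ) ((q : ℤ) + 1) := by
      have := Finset.sum_range_add_sum_Ico (fun i => laurentMon (i : ℤ) ((q : ℤ) + 1)) hcc
      have t1 := tel1 c ((q : ℤ) + 1)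
      have t2 := tel1 c' ((q : ℤ) + 1)
      linear_combination t1 - t2 + (1 - laurentMon 1 0) * this
    have key4 : (1 - laurentMon 0 1) * laurentMon (c : ℤ) (q : ℤ)
        = laurentMon (c : ℤ) (q : ℤ) - laurentMon (c : ℤ) ((q : ℤ) + 1) := by
      have h : laurentMon 0 1 * laurentMon (c : ℤ) (q : ℤ)
          = laurentMon (c : ℤ) ((q : ℤ) + 1) := by rw [mon_mul]; ring_nf
      linear_combination -h
    rw [Finset.sum_range_succ, ← hc]
    push_cast
    linear_combination ih + (1 - laurentMon 1 0) * key1 + key3 - key4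

lemma mon_congr {a b a' b' : ℤ} (h1 : a = a') (h2 : b = b') :
    laurentMon a b = laurentMon a' b' := by rw [h1, h2]

/-- A rowLen computation helper. -/
lemma rowLen_eq {Y : YoungDiagram} {i n : ℕ} (h1 : ¬ (i, n) ∈ Y)
    (h2 : ∀ j < n, (i, j) ∈ Y) : Y.rowLen i = n := by
  rw [YoungDiagram.mem_iff_lt_rowLen] at h1
  rcases n with _ | m
  · omega
  · have := h2 m (Nat.lt_succ_self m)
    rw [YoungDiagram.mem_iff_lt_rowLen] at this
    omega

lemma colLen_eq {Y : YoungDiagram} {j n : ℕ} (h1 : ¬ (n, j) ∈ Y)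
    (h2 : ∀ i < n, (i, j) ∈ Y) : Y.colLen j = n := by
  rw [YoungDiagram.mem_iff_lt_colLen] at h1
  rcases n with _ | m
  · omega
  · have := h2 m (Nat.lt_succ_self m)
    rw [YoungDiagram.mem_iff_lt_colLen] at this
    omega

/-- Removing a corner from a nonempty Young diagram. -/
lemma exists_corner (T : YoungDiagram) (h : T.cells.Nonempty) :
    ∃ (p q : ℕ) (T' : YoungDiagram),
      T.cells = insert (p, q) T'.cells ∧ (p, q) ∉ T'.cells ∧
      T.rowLen p = q + 1 ∧ T.colLen q = p + 1 ∧
      T'.rowLen p = q ∧ T'.colLen q = p ∧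
      (∀ i, i ≠ p → T'.rowLen i = T.rowLen i) ∧
      (∀ j, j ≠ q → T'.colLen j = T.colLen j) ∧
      T'.cells.card < T.cells.card := by
  classical
  set p := (T.cells.image Prod.fst).max' (h.image _) with hp
  have hmax : ∀ c ∈ T.cells, c.1 ≤ p := fun c hc =>
    Finset.le_max' _ _ (Finset.mem_image_of_mem _ hc)
  have hrowpos : 0 < T.rowLen p := by
    obtain ⟨c, hc1, hc2⟩ := Finset.mem_image.mp ((T.cells.image Prod.fst).max'_mem (h.image _))
    have h2 : c.1 = p := hc2
    have : (p, c.2) ∈ T := by rw [← h2]; simpa using hc1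
    rw [YoungDiagram.mem_iff_lt_rowLen] at this
    omega
  set q := T.rowLen p - 1 with hq
  have hrow : T.rowLen p = q + 1 := by omega
  have hpq : (p, q) ∈ T := by rw [YoungDiagram.mem_iff_lt_rowLen]; omega
  have hnotup : (p + 1, q) ∉ T := by
    intro hmem
    have : p + 1 ≤ p := hmax _ ((YoungDiagram.mem_cells _).mpr hmem)
    omega
  have hcol : T.colLen q = p + 1 := by
    apply colLen_eq hnotup
    intro i hi
    exact T.up_left_mem (by omega) le_rfl hpq
  -- the diagram with the corner removed
  refine ⟨p, q, ⟨T.cells.erase (p, q), ?_⟩, ?_, ?_, hrow, hcol, ?_, ?_, ?_, ?_, ?_⟩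
  · intro a b hba ha
    simp only [Finset.coe_erase, Set.mem_diff, Set.mem_singleton_iff, Finset.mem_coe] at *
    refine ⟨T.isLowerSet hba ha.1, ?_⟩
    rintro rfl
    have h1 : a.1 ≤ p := hmax _ ha.1
    have h2 : a.2 < T.rowLen a.1 := by
      rw [← YoungDiagram.mem_iff_lt_rowLen]; exact ha.1
    have h3 : p ≤ a.1 := hba.1
    have h4 : q ≤ a.2 := hba.2
    have h5 : a.1 = p := le_antisymm h1 h3
    rw [h5, hrow] at h2
    exact ha.2 (Prod.ext h5 (by omega))
  · exact (Finset.insert_erase ((YoungDiagram.mem_cells _).mpr hpq)).symm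
  · exact Finset.notMem_erase _ _
  · -- rowLen T' p = q
    apply rowLen_eq
    · show (p, q) ∉ Finset.erase _ _
      exact Finset.notMem_erase _ _
    · intro j hj
      show (p, j) ∈ Finset.erase _ _
      rw [Finset.mem_erase]
      refine ⟨by simp [Prod.ext_iff]; omega, ?_⟩
      rw [YoungDiagram.mem_cells, YoungDiagram.mem_iff_lt_rowLen]; omega
  · -- colLen T' q = p
    apply colLen_eq
    · show (p, q) ∉ Finset.erase _ _
      exact Finset.notMem_erase _ _
    · intro i hi
      show (i, q) ∈ Finset.erase _ _
      rw [Finset.mem_erase]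
      refine ⟨by simp [Prod.ext_iff]; omega, ?_⟩
      rw [YoungDiagram.mem_cells]
      exact T.up_left_mem (by omega) le_rfl hpq
  · -- rows other than p unchanged
    intro i hi
    have hmem : ∀ j, ((i, j) ∈ Finset.erase T.cells (p, q)) ↔ (i, j) ∈ T := by
      intro j
      rw [Finset.mem_erase, YoungDiagram.mem_cells]
      simp [Prod.ext_iff, hi]
    rcases Nat.eq_zero_or_pos (T.rowLen i) with h0 | h0
    · rw [h0]
      apply rowLen_eq
      · show ¬ _ ∈ Finset.erase _ _
        rw [hmem 0, YoungDiagram.mem_iff_lt_rowLen]; omega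
      · omega
    · apply rowLen_eq
      · show ¬ _ ∈ Finset.erase _ _
        rw [hmem _, YoungDiagram.mem_iff_lt_rowLen]; omega
      · intro j hj
        show _ ∈ Finset.erase _ _
        rw [hmem _, YoungDiagram.mem_iff_lt_rowLen]; omega
  · -- columns other than q unchanged
    intro j hj
    have hmem : ∀ i, ((i, j) ∈ Finset.erase T.cells (p, q)) ↔ (i, j) ∈ T := by
      intro i
      rw [Finset.mem_erase, YoungDiagram.mem_cells]
      simp [Prod.ext_iff, hj]
    rcases Nat.eq_zero_or_pos (T.colLen j) with h0 | h0
    · rw [h0]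
      apply colLen_eq
      · show ¬ _ ∈ Finset.erase _ _
        rw [hmem 0, YoungDiagram.mem_iff_lt_colLen]; omega
      · omega
    · apply colLen_eq
      · show ¬ _ ∈ Finset.erase _ _
        rw [hmem _, YoungDiagram.mem_iff_lt_colLen]; omega
      · intro i hi
        show _ ∈ Finset.erase _ _
        rw [hmem _, YoungDiagram.mem_iff_lt_colLen]; omega
  · exact Finset.card_erase_lt_of_mem ((YoungDiagram.mem_cells _).mpr hpq)

lemma empty_case (S T : YoungDiagram) (hT : T.cells = ∅) :
    (∑ s ∈ S.cells, laurentMon (s.1 : ℤ) (s.2 : ℤ)) * laurentMon 1 1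
      = ∑ s ∈ S.cells, laurentMon (-(legLength T s)) (armLength S s + 1) := by
  have hcol : ∀ j, T.colLen j = 0 := by
    intro j
    by_contra hc
    have : (0, j) ∈ T := by rw [YoungDiagram.mem_iff_lt_colLen]; omega
    have h2 := (YoungDiagram.mem_cells _).mpr this
    rw [hT] at h2
    exact absurd h2 (Finset.notMem_empty _)
  rw [Finset.sum_mul]
  refine Finset.sum_nbij' (fun s => (s.1, S.rowLen s.1 - 1 - s.2))
    (fun s => (s.1, S.rowLen s.1 - 1 - s.2)) ?_ ?_ ?_ ?_ ?_
  · intro s hs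
    have hj : s.2 < S.rowLen s.1 := by
      rw [← YoungDiagram.mem_iff_lt_rowLen]
      simpa using (YoungDiagram.mem_cells _).mp hs
    rw [YoungDiagram.mem_cells, YoungDiagram.mem_iff_lt_rowLen]
    omega
  · intro s hs
    have hj : s.2 < S.rowLen s.1 := by
      rw [← YoungDiagram.mem_iff_lt_rowLen]
      simpa using (YoungDiagram.mem_cells _).mp hs
    rw [YoungDiagram.mem_cells, YoungDiagram.mem_iff_lt_rowLen]
    omega
  · intro s hs
    have hj : s.2 < S.rowLen s.1 := by
      rw [← YoungDiagram.mem_iff_lt_rowLen]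
      simpa using (YoungDiagram.mem_cells _).mp hs
    simp only
    ext <;> simp <;> omega
  · intro s hs
    have hj : s.2 < S.rowLen s.1 := by
      rw [← YoungDiagram.mem_iff_lt_rowLen]
      simpa using (YoungDiagram.mem_cells _).mp hs
    simp only
    ext <;> simp <;> omega
  · intro s hs
    have hj : s.2 < S.rowLen s.1 := by
      rw [← YoungDiagram.mem_iff_lt_rowLen]
      simpa using (YoungDiagram.mem_cells _).mp hs
    rw [mon_mul]
    simp only [legLength, armLength, hcol]
    exact mon_congr (by push_cast; ring) (by push_cast [Nat.cast_sub (by omega : S.rowLen s.1 - 1 - s.2 ≤ S.rowLen s.1)]; omega)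

lemma main_aux (n : ℕ) : ∀ (S T : YoungDiagram), T.cells.card ≤ n →
    (∑ s ∈ S.cells, laurentMon (s.1 : ℤ) (s.2 : ℤ)) * laurentMon 1 1
      + (∑ t ∈ T.cells, laurentMon (-(t.1 : ℤ)) (-(t.2 : ℤ)))
      - (∑ s ∈ S.cells, laurentMon (s.1 : ℤ) (s.2 : ℤ))
          * (∑ t ∈ T.cells, laurentMon (-(t.1 : ℤ)) (-(t.2 : ℤ)))
          * (1 - laurentMon 1 0) * (1 - laurentMon 0 1)
    = (∑ s ∈ S.cells, laurentMon (-(legLength T s)) (armLength S s + 1))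
      + ∑ t ∈ T.cells, laurentMon (legLength S t + 1) (-(armLength T t)) := by
  induction n with
  | zero =>
    intro S T hcard
    have hT : T.cells = ∅ := Finset.card_eq_zero.mp (Nat.le_zero.mp hcard)
    rw [hT]
    simp only [Finset.sum_empty, add_zero, mul_zero, zero_mul, sub_zero]
    exact empty_case S T hT
  | succ n ih =>
    intro S T hcard
    rcases Finset.eq_empty_or_nonempty T.cells with hT | hT
    · rw [hT]
      simp only [Finset.sum_empty, add_zero, mul_zero, zero_mul, sub_zero]
      exact empty_case S T hT
    obtain ⟨p, q, T', hins, hnm, hrow, hcol, hrow', hcol', hrowo, hcolo, hlt⟩ :=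
      exists_corner T hT
    have hc2 : T.cells.card = T'.cells.card + 1 := by
      rw [hins, Finset.card_insert_of_notMem hnm]
    have IH := ih S T' (by omega)
    have E1 : (∑ t ∈ T.cells, laurentMon (-(t.1 : ℤ)) (-(t.2 : ℤ)))
        = laurentMon (-(p : ℤ)) (-(q : ℤ))
          + ∑ t ∈ T'.cells, laurentMon (-(t.1 : ℤ)) (-(t.2 : ℤ)) := by
      rw [hins, Finset.sum_insert hnm]
    have E2 : (∑ s ∈ S.cells, laurentMon (-(legLength T s)) (armLength S s + 1))
        = (∑ s ∈ S.cells, laurentMon (-(legLength T' s)) (armLength S s + 1))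
          + ∑ i ∈ range (S.colLen q),
              (laurentMon ((i : ℤ) - p) ((S.rowLen i : ℤ) - q)
                - laurentMon ((i : ℤ) - p + 1) ((S.rowLen i : ℤ) - q)) := by
      have step : ∑ s ∈ S.cells,
          (laurentMon (-(legLength T s)) (armLength S s + 1)
            - laurentMon (-(legLength T' s)) (armLength S s + 1))
          = ∑ i ∈ range (S.colLen q),
              (laurentMon ((i : ℤ) - p) ((S.rowLen i : ℤ) - q)
                - laurentMon ((i : ℤ) - p + 1) ((S.rowLen i : ℤ) - q)) := by
        rw [← Finset.sum_subset (Finset.filter_subset (fun c => c.snd = q) S.cells)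
          (fun x hx hnx => ?_)]
        · rw [show S.cells.filter (fun c => c.snd = q) = S.col q from rfl, sum_col]
          refine Finset.sum_congr rfl fun i hi => ?_
          rw [Finset.mem_range] at hi
          simp only [legLength, armLength, hcol, hcol']
          congr 1 <;> exact mon_congr (by push_cast; ring) (by push_cast; ring)
        · have hx2 : x.2 ≠ q := by
            intro hq2
            exact hnx (Finset.mem_filter.mpr ⟨hx, hq2⟩)
          have hll : legLength T x = legLength T' x := by
            unfold legLength; rw [hcolo _ hx2]
          rw [hll, sub_self]
      rw [Finset.sum_sub_distrib] at step
      linear_combination step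
    have E3 : (∑ t ∈ T.cells, laurentMon (legLength S t + 1) (-(armLength T t)))
        = laurentMon ((S.colLen q : ℤ) - p) 0
          + ∑ t ∈ T'.cells, laurentMon (legLength S t + 1) (-(armLength T t)) := by
      rw [hins, Finset.sum_insert hnm]
      congr 1
      exact mon_congr (by simp [legLength])
        (by simp [armLength, hrow])
    have E4 : (∑ t ∈ T'.cells, laurentMon (legLength S t + 1) (-(armLength T t)))
        = (∑ t ∈ T'.cells, laurentMon (legLength S t + 1) (-(armLength T' t)))
          + ∑ j ∈ range q,
              (laurentMon ((S.colLen j : ℤ) - p) ((j : ℤ) - q)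
                - laurentMon ((S.colLen j : ℤ) - p) ((j : ℤ) - q + 1)) := by
      have step : ∑ t ∈ T'.cells,
          (laurentMon (legLength S t + 1) (-(armLength T t))
            - laurentMon (legLength S t + 1) (-(armLength T' t)))
          = ∑ j ∈ range q,
              (laurentMon ((S.colLen j : ℤ) - p) ((j : ℤ) - q)
                - laurentMon ((S.colLen j : ℤ) - p) ((j : ℤ) - q + 1)) := by
        rw [← Finset.sum_subset (Finset.filter_subset (fun c => c.fst = p) T'.cells)
          (fun x hx hnx => ?_)]
        · rw [show T'.cells.filter (fun c => c.fst = p) = T'.row p from rfl, sum_row, hrow']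
          refine Finset.sum_congr rfl fun j hj => ?_
          rw [Finset.mem_range] at hj
          simp only [legLength, armLength, hrow, hrow']
          congr 1 <;> exact mon_congr (by push_cast; ring) (by push_cast; ring)
        · have hx1 : x.1 ≠ p := by
            intro hp1
            exact hnx (Finset.mem_filter.mpr ⟨hx, hp1⟩)
          have haa : armLength T x = armLength T' x := by
            unfold armLength; rw [hrowo _ hx1]
          rw [haa, sub_self]
      rw [Finset.sum_sub_distrib] at step
      linear_combination step
    have hA := lemA S q
    rw [show QY S = ∑ s ∈ S.cells, laurentMon (s.1 : ℤ) (s.2 : ℤ) from rfl] at hA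
    have h1 : (1 - laurentMon 1 0)
          * (∑ i ∈ range (S.colLen q), laurentMon (i : ℤ) (S.rowLen i : ℤ))
          * laurentMon (-(p : ℤ)) (-(q : ℤ))
        = ∑ i ∈ range (S.colLen q),
            (laurentMon ((i : ℤ) - p) ((S.rowLen i : ℤ) - q)
              - laurentMon ((i : ℤ) - p + 1) ((S.rowLen i : ℤ) - q)) := by
      rw [mul_assoc, Finset.sum_mul, Finset.mul_sum]
      refine Finset.sum_congr rfl fun i _ => ?_
      rw [mon_mul, sub_mul, one_mul, mon_mul]
      congr 1 <;> exact mon_congr (by push_cast; ring) (by push_cast; ring)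
    have h2 : (1 - laurentMon 0 1)
          * (∑ j ∈ range q, laurentMon (S.colLen j : ℤ) (j : ℤ))
          * laurentMon (-(p : ℤ)) (-(q : ℤ))
        = ∑ j ∈ range q,
            (laurentMon ((S.colLen j : ℤ) - p) ((j : ℤ) - q)
              - laurentMon ((S.colLen j : ℤ) - p) ((j : ℤ) - q + 1)) := by
      rw [mul_assoc, Finset.sum_mul, Finset.mul_sum]
      refine Finset.sum_congr rfl fun j _ => ?_
      rw [mon_mul, sub_mul, one_mul, mon_mul]
      congr 1 <;> exact mon_congr (by push_cast; ring) (by push_cast; ring)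
    have h3 : laurentMon (S.colLen q : ℤ) (q : ℤ) * laurentMon (-(p : ℤ)) (-(q : ℤ))
        = laurentMon ((S.colLen q : ℤ) - p) 0 := by
      rw [mon_mul]; exact mon_congr (by ring) (by ring)
    linear_combination IH
      + (1 - (∑ s ∈ S.cells, laurentMon (s.1 : ℤ) (s.2 : ℤ))
            * (1 - laurentMon 1 0) * (1 - laurentMon 0 1)) * E1
      - E2 - E3 - E4
      + laurentMon (-(p : ℤ)) (-(q : ℤ)) * hA + h1 + h2 + h3

end TangentAux

/-- **Fixed-point tangent character identity** (proof of Proposition 5.1 of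
Gasparim–Liu): with `Q_Y(t₁,t₂) = Σ_{(i,j)∈Y} t₁^i t₂^j`,
`Q_S·t₁t₂ + Q_T(t₁⁻¹,t₂⁻¹) − Q_S·Q_T(t₁⁻¹,t₂⁻¹)·(1−t₁)(1−t₂)
  = Σ_{s∈S} t₁^{−l_T(s)} t₂^{a_S(s)+1} + Σ_{t∈T} t₁^{l_S(t)+1} t₂^{−a_T(t)}`
in `ℤ[t₁^{±1}, t₂^{±1}]`. -/
theorem tangent_character_identity (S T : YoungDiagram) :
    (∑ s ∈ S.cells, laurentMon (s.1 : ℤ) (s.2 : ℤ)) * laurentMon 1 1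
      + (∑ t ∈ T.cells, laurentMon (-(t.1 : ℤ)) (-(t.2 : ℤ)))
      - (∑ s ∈ S.cells, laurentMon (s.1 : ℤ) (s.2 : ℤ))
          * (∑ t ∈ T.cells, laurentMon (-(t.1 : ℤ)) (-(t.2 : ℤ)))
          * (1 - laurentMon 1 0) * (1 - laurentMon 0 1)
    = (∑ s ∈ S.cells, laurentMon (-(legLength T s)) (armLength S s + 1))
      + ∑ t ∈ T.cells, laurentMon (legLength S t + 1) (-(armLength T t)) :=
  main_aux T.cells.card S T le_rfl
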